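/- For a finite game and q > 0, a strategy profile π* satisfies ⟨v^q(π*), π − π*⟩ ≤ 0 for all mixed strategy profiles π if and only if for every player i and every action α in the support of π*_i, u_i(e_α, π*_{-i}) = u_i(π*). -/

import Mathlib

open Finset

variable {N : Type*} [Fintype N] [DecidableEq N]
variable {A : N → Type*} [∀ i, Fintype (A i)] [∀ i, DecidableEq (A i)]

/-- `p` is a mixed strategy (a point of the simplex) over a finite action set. -/
def IsMixed {α : Type*} [Fintype α] (p : α → ℝ) : Prop :=
  (∀ a, 0 ≤ p a) ∧ ∑ a, p a = 1

/-- A mixed strategy profile: one mixed strategy per player. -/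
def IsProfile {N : Type*} [Fintype N] {A : N → Type*} [∀ i, Fintype (A i)]
    (π : ∀ i, A i → ℝ) : Prop := ∀ i, IsMixed (π i)

/-- The pure strategy playing action `α` with probability one. -/
def pureStrat {α : Type*} [DecidableEq α] (a : α) : α → ℝ :=
  fun b => if b = a then 1 else 0

/-- Expected utility of reward function `R` under the mixed profile `π`,
where players randomise independently. -/
def expUtil (R : (∀ i, A i) → ℝ) (π : ∀ i, A i → ℝ) : ℝ :=
  ∑ a : ∀ i, A i, (∏ i, π i (a i)) * R a

/-- Unilateral deviation of player `i` to the mixed strategy `p`. -/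
def dev (π : ∀ i, A i → ℝ) (i : N) (p : A i → ℝ) : ∀ j, A j → ℝ :=
  Function.update π i p

/-- Nash equilibrium: no profitable unilateral mixed deviation. -/
def IsNash (R : N → (∀ i, A i) → ℝ) (π : ∀ i, A i → ℝ) : Prop :=
  IsProfile π ∧ ∀ i (p : A i → ℝ), IsMixed p →
    expUtil (R i) (dev π i p) ≤ expUtil (R i) π

/-- Strict Nash equilibrium: every unilateral deviation to a different mixed
strategy strictly decreases the deviator's utility. -/
def IsStrictNash (R : N → (∀ i, A i) → ℝ) (π : ∀ i, A i → ℝ) : Prop :=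
  IsProfile π ∧ ∀ i (p : A i → ℝ), IsMixed p → p ≠ π i →
    expUtil (R i) (dev π i p) < expUtil (R i) π

/-- The `q`-gradient of player `i`'s expected utility at the profile `π`
(component for action `α`), with real exponentiation `x ^ q` (`Real.rpow`). -/
noncomputable def qGrad (q : ℝ) (R : N → (∀ i, A i) → ℝ)
    (π : ∀ i, A i → ℝ) (i : N) (α : A i) : ℝ :=
  (π i α) ^ q *
    (expUtil (R i) (dev π i (pureStrat α)) -
      (∑ β, (π i β) ^ q * expUtil (R i) (dev π i (pureStrat β))) /
        (∑ β, (π i β) ^ q))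

lemma isMixed_pureStrat {α : Type*} [Fintype α] [DecidableEq α] (a : α) :
    IsMixed (pureStrat a) := by
  constructor
  · intro b; unfold pureStrat; positivity
  · simp [pureStrat]

lemma isProfile_dev {π : ∀ i, A i → ℝ} (hπ : IsProfile π) (i : N) {p : A i → ℝ}
    (hp : IsMixed p) : IsProfile (dev π i p) := by
  intro j
  rcases eq_or_ne j i with rfl | hj
  · simpa [dev] using hp
  · simpa [dev, Function.update_of_ne hj] using hπ j

lemma expUtil_expand (R : (∀ i, A i) → ℝ) (π : ∀ i, A i → ℝ) (i : N) :
    expUtil R π = ∑ β, π i β * expUtil R (dev π i (pureStrat β)) := by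
  unfold expUtil dev
  simp_rw [Finset.mul_sum]
  rw [Finset.sum_comm]
  refine Finset.sum_congr rfl fun a _ => ?_
  have hprod : ∀ (p : A i → ℝ),
      (∏ j, Function.update π i p j (a j)) =
        p (a i) * ∏ j ∈ Finset.univ.erase i, π j (a j) := by
    intro p
    rw [← Finset.mul_prod_erase Finset.univ _ (Finset.mem_univ i)]
    congr 1
    · simp
    · refine Finset.prod_congr rfl fun j hj => ?_
      rw [Function.update_of_ne (Finset.mem_erase.1 hj).1]
  rw [← Finset.mul_prod_erase Finset.univ (fun j => π j (a j)) (Finset.mem_univ i)]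
  simp_rw [hprod, pureStrat]
  simp [mul_ite, ite_mul, Finset.sum_ite_eq, mul_comm, mul_assoc, mul_left_comm]

section Aux
variable (q : ℝ) (hq : 0 < q) (R : N → (∀ i, A i) → ℝ) (πs : ∀ i, A i → ℝ)
  (hπs : IsProfile πs) (i : N)

lemma w_pos_sum (hq : 0 < q) (hπs : IsProfile πs) : 0 < ∑ β, (πs i β) ^ q := by
  have hex : ∃ β, 0 < πs i β := by
    by_contra hcon
    push_neg at hcon
    have : ∑ β, πs i β ≤ 0 := Finset.sum_nonpos fun β _ => hcon β
    linarith [(hπs i).2]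
  obtain ⟨β, hβ⟩ := hex
  refine Finset.sum_pos' (fun γ _ => Real.rpow_nonneg ((hπs i).1 γ) q) ⟨β, Finset.mem_univ β, ?_⟩
  exact Real.rpow_pos_of_pos hβ q

lemma qGrad_unsupported (hq : 0 < q) {β : A i} (hβ : πs i β = 0) :
    qGrad q R πs i β = 0 := by
  unfold qGrad
  rw [hβ, Real.zero_rpow hq.ne', zero_mul]

lemma qGrad_sum_zero (hq : 0 < q) (hπs : IsProfile πs) :
    ∑ β, qGrad q R πs i β = 0 := by
  have hS := w_pos_sum q πs i hq hπs
  unfold qGrad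
  simp_rw [mul_sub]
  rw [Finset.sum_sub_distrib, ← Finset.sum_mul]
  have : (∑ β, (πs i β) ^ q) *
      ((∑ β, (πs i β) ^ q * expUtil (R i) (dev πs i (pureStrat β))) /
        ∑ β, (πs i β) ^ q) =
      ∑ β, (πs i β) ^ q * expUtil (R i) (dev πs i (pureStrat β)) := by
    field_simp
  rw [this, sub_self]

lemma aux_forward (hq : 0 < q) (hπs : IsProfile πs)
    (key : ∀ β, qGrad q R πs i β ≤ ∑ γ, πs i γ * qGrad q R πs i γ) :
    ∀ α, 0 < πs i α → expUtil (R i) (dev πs i (pureStrat α)) = expUtil (R i) πs := by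
  intro α hα
  set c : ℝ := ∑ γ, πs i γ * qGrad q R πs i γ with hc
  -- every supported action has qGrad equal to c
  have h1 : ∑ γ, πs i γ * (c - qGrad q R πs i γ) = 0 := by
    simp_rw [mul_sub]
    rw [Finset.sum_sub_distrib, ← Finset.sum_mul, (hπs i).2, one_mul, ← hc, sub_self]
  have hterm : ∀ γ ∈ Finset.univ, 0 ≤ πs i γ * (c - qGrad q R πs i γ) := by
    intro γ _
    exact mul_nonneg ((hπs i).1 γ) (sub_nonneg.2 (key γ))
  have hsupp : ∀ β, 0 < πs i β → qGrad q R πs i β = c := by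
    intro β hβ
    have := (Finset.sum_eq_zero_iff_of_nonneg hterm).1 h1 β (Finset.mem_univ β)
    have h2 : c - qGrad q R πs i β = 0 := by
      rcases mul_eq_zero.1 this with h | h
      · exact absurd h hβ.ne'
      · exact h
    linarith
  -- c = 0
  have hc0 : c = 0 := by
    have hsum := qGrad_sum_zero q R πs i hq hπs
    set T := Finset.univ.filter (fun β => 0 < πs i β) with hT
    have hTs : ∑ β ∈ T, qGrad q R πs i β = ∑ β, qGrad q R πs i β := by
      refine Finset.sum_subset (Finset.subset_univ T) fun β _ hβ => ?_
      have : πs i β = 0 := by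
        rcases ((hπs i).1 β).lt_or_eq with h | h
        · exact absurd (Finset.mem_filter.2 ⟨Finset.mem_univ β, h⟩) hβ
        · exact h.symm
      exact qGrad_unsupported q R πs i hq this
    have hTc : ∑ β ∈ T, qGrad q R πs i β = T.card * c := by
      rw [Finset.sum_congr rfl fun β hβ => hsupp β (Finset.mem_filter.1 hβ).2]
      simp [mul_comm]
      exact Or.inl rfl
    have hαT : α ∈ T := Finset.mem_filter.2 ⟨Finset.mem_univ α, hα⟩
    have hcard : (0:ℝ) < T.card := by
      exact_mod_cast Finset.card_pos.2 ⟨α, hαT⟩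
    have : (T.card : ℝ) * c = 0 := by rw [← hTc, hTs, hsum]
    exact (mul_eq_zero.1 this).resolve_left hcard.ne'
  -- supported actions have payoff M
  have hS := w_pos_sum q πs i hq hπs
  set M : ℝ := (∑ β, (πs i β) ^ q * expUtil (R i) (dev πs i (pureStrat β))) /
        (∑ β, (πs i β) ^ q) with hM
  have huM : ∀ β, 0 < πs i β → expUtil (R i) (dev πs i (pureStrat β)) = M := by
    intro β hβ
    have h0 : qGrad q R πs i β = 0 := by rw [hsupp β hβ, hc0]
    have hw : (0:ℝ) < (πs i β) ^ q := Real.rpow_pos_of_pos hβ q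
    have := (mul_eq_zero.1 h0).resolve_left hw.ne'
    linarith [sub_eq_zero.1 this]
  -- expUtil πs = M
  have hEU : expUtil (R i) πs = M := by
    rw [expUtil_expand (R i) πs i]
    have : ∀ β ∈ Finset.univ, πs i β * expUtil (R i) (dev πs i (pureStrat β)) = πs i β * M := by
      intro β _
      rcases ((hπs i).1 β).lt_or_eq with h | h
      · rw [huM β h]
      · rw [← h, zero_mul, zero_mul]
    rw [Finset.sum_congr rfl this, ← Finset.sum_mul, (hπs i).2, one_mul]
  rw [hEU]
  exact huM α hα

lemma qGrad_eq_zero_of_indiff (hq : 0 < q) (hπs : IsProfile πs)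
    (h : ∀ α, 0 < πs i α →
      expUtil (R i) (dev πs i (pureStrat α)) = expUtil (R i) πs) :
    ∀ β, qGrad q R πs i β = 0 := by
  intro β
  have hS := w_pos_sum q πs i hq hπs
  have hM : (∑ γ, (πs i γ) ^ q * expUtil (R i) (dev πs i (pureStrat γ))) /
        (∑ γ, (πs i γ) ^ q) = expUtil (R i) πs := by
    have : ∀ γ ∈ Finset.univ, (πs i γ) ^ q * expUtil (R i) (dev πs i (pureStrat γ)) =
        (πs i γ) ^ q * expUtil (R i) πs := by
      intro γ _
      rcases ((hπs i).1 γ).lt_or_eq with hp | hp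
      · rw [h γ hp]
      · rw [← hp, Real.zero_rpow hq.ne', zero_mul, zero_mul]
    rw [Finset.sum_congr rfl this, ← Finset.sum_mul]
    field_simp
  rcases ((hπs i).1 β).lt_or_eq with hp | hp
  · unfold qGrad
    rw [hM, h β hp, sub_self, mul_zero]
  · exact qGrad_unsupported q R πs i hq hp.symm

end Aux

/-- for `q > 0`, the variational inequality
`⟨vᑫ(π*), π − π*⟩ ≤ 0` for all mixed profiles `π` holds iff every action in
the support of each `π*ᵢ` earns the same payoff as `π*` itself. -/
theorem qGrad_varIneq_iff_support_indifferent (q : ℝ) (hq : 0 < q)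
    (R : N → (∀ i, A i) → ℝ) (πs : ∀ i, A i → ℝ) (hπs : IsProfile πs) :
    (∀ π : ∀ i, A i → ℝ, IsProfile π →
        ∑ i, ∑ α, qGrad q R πs i α * (π i α - πs i α) ≤ 0) ↔
      (∀ i (α : A i), 0 < πs i α →
        expUtil (R i) (dev πs i (pureStrat α)) = expUtil (R i) πs) := by
  constructor
  · intro h i
    refine aux_forward q R πs i hq hπs fun β => ?_
    have hp := h (dev πs i (pureStrat β)) (isProfile_dev hπs i (isMixed_pureStrat β))
    have hred : ∑ j, ∑ γ, qGrad q R πs j γ * (dev πs i (pureStrat β) j γ - πs j γ) =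
        qGrad q R πs i β - ∑ γ, πs i γ * qGrad q R πs i γ := by
      rw [Finset.sum_eq_single i]
      · have : dev πs i (pureStrat β) i = pureStrat β := by simp [dev]
        rw [this]
        simp_rw [pureStrat, mul_sub, Finset.sum_sub_distrib, mul_ite, mul_one, mul_zero]
        rw [Finset.sum_ite_eq' Finset.univ β (fun γ => qGrad q R πs i γ)]
        simp [mul_comm]
      · intro j _ hj
        have : dev πs i (pureStrat β) j = πs j := by
          simp [dev, Function.update_of_ne hj]
        simp [this]
      · intro hi; exact absurd (Finset.mem_univ i) hi
    linarith [hred ▸ hp]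
  · intro h π hπ
    have hz : ∀ i β, qGrad q R πs i β = 0 := fun i =>
      qGrad_eq_zero_of_indiff q R πs i hq hπs (h i)
    simp [hz]
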